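/- There exists a constant c > 0 such that for every integer n ≥ 1, every finite sequence of elements of {a¹, a⁻¹, b¹, b⁻¹} ⊂ Ē whose product equals gₙ = ((n, 0), 0, 0) has at least n + c·n^{1/3} terms. Equivalently, the word length of gₙ over the generating set X = {a^{±1}, b^{±1}} exceeds its Stoll length n by at least c·n^{1/3} (disproving Conjecture 6.5 of Breuillard and Le Donne). -/

import Mathlib

noncomputable section

/-- The Engel Lie group `Ē`: underlying set `ℝ² × ℝ × ℝ`, with coordinates
`(x, y)` (endpoint), `A` (signed area) and `B` (the `y`-moment). -/
@[ext]
structure Engel where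
  x : ℝ
  y : ℝ
  A : ℝ
  B : ℝ

namespace Engel

instance : Mul Engel :=
  ⟨fun g h =>
    ⟨g.x + h.x, g.y + h.y,
     g.A + h.A + (g.x * h.y - g.y * h.x) / 2,
     g.B + h.B + g.y * h.A + (2 * g.y + h.y) * (g.x * h.y - g.y * h.x) / 6⟩⟩

instance : One Engel := ⟨⟨0, 0, 0, 0⟩⟩

instance : Inv Engel := ⟨fun g => ⟨-g.x, -g.y, -g.A, -g.B + g.y * g.A⟩⟩

@[simp] lemma mul_x (g h : Engel) : (g * h).x = g.x + h.x := rfl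
@[simp] lemma mul_y (g h : Engel) : (g * h).y = g.y + h.y := rfl
@[simp] lemma mul_A (g h : Engel) :
    (g * h).A = g.A + h.A + (g.x * h.y - g.y * h.x) / 2 := rfl
@[simp] lemma mul_B (g h : Engel) :
    (g * h).B = g.B + h.B + g.y * h.A
      + (2 * g.y + h.y) * (g.x * h.y - g.y * h.x) / 6 := rfl
@[simp] lemma one_x : (1 : Engel).x = 0 := rfl
@[simp] lemma one_y : (1 : Engel).y = 0 := rfl
@[simp] lemma one_A : (1 : Engel).A = 0 := rfl
@[simp] lemma one_B : (1 : Engel).B = 0 := rfl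
@[simp] lemma inv_x (g : Engel) : g⁻¹.x = -g.x := rfl
@[simp] lemma inv_y (g : Engel) : g⁻¹.y = -g.y := rfl
@[simp] lemma inv_A (g : Engel) : g⁻¹.A = -g.A := rfl
@[simp] lemma inv_B (g : Engel) : g⁻¹.B = -g.B + g.y * g.A := rfl

instance : Group Engel where
  mul_assoc a b c := by ext <;> simp <;> ring
  one_mul a := by ext <;> simp
  mul_one a := by ext <;> simp
  inv_mul_cancel a := by
    ext <;>
      simp only [mul_x, mul_y, mul_A, mul_B, inv_x, inv_y, inv_A, inv_B,
        one_x, one_y, one_A, one_B] <;> ring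

/-- `a^t`: the straight segment from `(0,0)` to `(t,t)`. -/
def aPow (t : ℝ) : Engel := ⟨t, t, 0, 0⟩

/-- `b^t`: the straight segment from `(0,0)` to `(t,-t)`. -/
def bPow (t : ℝ) : Engel := ⟨t, -t, 0, 0⟩

end Engel

namespace Engel

/-! ### Auxiliary development -/

/-- A generator-like step: `x, y ∈ {±1}` and trivial higher coordinates. -/
def Step (g : Engel) : Prop :=
  (g.x = 1 ∨ g.x = -1) ∧ (g.y = 1 ∨ g.y = -1) ∧ g.A = 0 ∧ g.B = 0

def Xs : List Engel → ℝ
  | [] => 0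
  | g :: L => g.x + Xs L

def Ys : List Engel → ℝ
  | [] => 0
  | g :: L => g.y + Ys L

/-- `∑ δ_k m_k` started at height `y`. -/
def Pf (y : ℝ) : List Engel → ℝ
  | [] => 0
  | g :: L => g.x * (y + g.y / 2) + Pf (y + g.y) L

/-- `∑ δ_k (y_{k-1}^2 + y_{k-1} ε_k + 1/3)` started at height `y`. -/
def Qf (y : ℝ) : List Engel → ℝ
  | [] => 0
  | g :: L => g.x * (y ^ 2 + y * g.y + 1 / 3) + Qf (y + g.y) L

/-- Sum of `m_k^2` over forward steps. -/
def SFf (y : ℝ) : List Engel → ℝ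
  | [] => 0
  | g :: L => (if g.x = -1 then 0 else (y + g.y / 2) ^ 2) + SFf (y + g.y) L

/-- Sum of `m_k^2` over backward steps. -/
def SBf (y : ℝ) : List Engel → ℝ
  | [] => 0
  | g :: L => (if g.x = -1 then (y + g.y / 2) ^ 2 else 0) + SBf (y + g.y) L

/-- Number of backward steps (as a real). -/
def Bc : List Engel → ℝ
  | [] => 0
  | g :: L => (if g.x = -1 then 1 else 0) + Bc L

/-- Running maximum of `|height|`, starting at height `y` with record `R`. -/
def Hf (y R : ℝ) : List Engel → ℝ
  | [] => R
  | g :: L => Hf (y + g.y) (max R |y + g.y|) L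

lemma Pf_shift (L : List Engel) : ∀ y : ℝ, Pf y L = Pf 0 L + y * Xs L := by
  induction L with
  | nil => intro y; simp [Pf, Xs]
  | cons g L ih =>
    intro y
    simp only [Pf, Xs, ih (y + g.y), ih (0 + g.y)]
    ring

lemma Qf_shift (L : List Engel) :
    ∀ y : ℝ, Qf y L = Qf 0 L + 2 * y * Pf 0 L + y ^ 2 * Xs L := by
  induction L with
  | nil => intro y; simp [Qf, Pf, Xs]
  | cons g L ih =>
    intro y
    simp only [Qf, Pf, Xs, ih (y + g.y), ih (0 + g.y), Pf_shift L (0 + g.y)]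
    ring

lemma prod_invariant (L : List Engel) (h : ∀ g ∈ L, Step g) :
    L.prod = ⟨Xs L, Ys L, Xs L * Ys L / 2 - Pf 0 L,
      Xs L * (Ys L) ^ 2 / 6 - Qf 0 L / 2⟩ := by
  induction L with
  | nil =>
    rw [List.prod_nil]
    ext <;> simp [Xs, Ys, Pf, Qf]
  | cons g L ih =>
    have hg := h g (List.mem_cons_self)
    obtain ⟨hx, hy, hA, hB⟩ := hg
    have ih' := ih fun g hg => h g (List.mem_cons_of_mem _ hg)
    have hy2 : g.y ^ 2 = 1 := by rcases hy with h' | h' <;> rw [h'] <;> norm_num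
    rw [List.prod_cons, ih']
    ext
    · simp [Xs]
    · simp [Ys]
    · simp only [mul_A, hA, Xs, Ys, Pf, Pf_shift L (0 + g.y), Pf_shift L (g.y)]
      ring
    · simp only [mul_B, mul_A, hA, hB, Xs, Ys, Pf, Qf,
        Pf_shift L (0 + g.y), Qf_shift L (0 + g.y)]
      linear_combination (-(g.x) / 6) * hy2

lemma quarter (a : ℤ) (ε : ℝ) (h : ε = 1 ∨ ε = -1) :
    (1 : ℝ) / 4 ≤ ((a : ℝ) + ε / 2) ^ 2 := by
  rcases h with h | h <;> subst h
  · rcases le_or_gt 0 a with h' | h'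
    · have ha : (0 : ℝ) ≤ (a : ℝ) := by exact_mod_cast h'
      nlinarith
    · have ha : (a : ℝ) ≤ -1 := by exact_mod_cast (by omega : a ≤ -1)
      nlinarith
  · rcases le_or_gt 1 a with h' | h'
    · have ha : (1 : ℝ) ≤ (a : ℝ) := by exact_mod_cast h'
      nlinarith
    · have ha : (a : ℝ) ≤ 0 := by exact_mod_cast (by omega : a ≤ 0)
      nlinarith

lemma mid_sq (y ε : ℝ) (h : ε = 1 ∨ ε = -1) :
    (y + ε / 2) ^ 2 ≤ max (y ^ 2) ((y + ε) ^ 2) := by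
  rcases h with h | h <;> subst h
  · rcases le_or_gt (-(1 : ℝ) / 2) y with h' | h'
    · exact le_max_of_le_right (by nlinarith)
    · exact le_max_of_le_left (by nlinarith)
  · rcases le_or_gt y (1 / 2 : ℝ) with h' | h'
    · exact le_max_of_le_right (by nlinarith)
    · exact le_max_of_le_left (by nlinarith)

lemma Bc_nat (L : List Engel) : ∃ b : ℕ, Bc L = (b : ℝ) := by
  induction L with
  | nil => exact ⟨0, by simp [Bc]⟩
  | cons g L ih =>
    obtain ⟨b, hb⟩ := ih
    by_cases h : g.x = -1
    · refine ⟨b + 1, ?_⟩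
      simp only [Bc, if_pos h, hb]
      push_cast; ring
    · exact ⟨b, by simp only [Bc, if_neg h, hb]; ring⟩

lemma Bc_nonneg (L : List Engel) : 0 ≤ Bc L := by
  obtain ⟨b, hb⟩ := Bc_nat L; rw [hb]; positivity

lemma Hf_ge_R (L : List Engel) : ∀ y R : ℝ, R ≤ Hf y R L := by
  induction L with
  | nil => intro y R; simp [Hf]
  | cons g L ih =>
    intro y R
    exact le_trans (le_max_left _ _) (ih (y + g.y) (max R |y + g.y|))

lemma Hf_int (L : List Engel) (h : ∀ g ∈ L, Step g) :
    ∀ (a r : ℤ), ∃ hh : ℤ, Hf (a : ℝ) (r : ℝ) L = (hh : ℝ) := by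
  induction L with
  | nil => intro a r; exact ⟨r, rfl⟩
  | cons g L ih =>
    intro a r
    obtain ⟨_, hy, _, _⟩ := h g (List.mem_cons_self)
    have ih' := ih fun g hg => h g (List.mem_cons_of_mem _ hg)
    rcases hy with hy | hy
    · obtain ⟨hh, hhh⟩ := ih' (a + 1) (max r |a + 1|)
      refine ⟨hh, ?_⟩
      show Hf ((a : ℝ) + g.y) (max (r : ℝ) |(a : ℝ) + g.y|) L = (hh : ℝ)
      rw [hy, ← hhh]
      congr 1 <;> push_cast [Int.cast_max, Int.cast_abs] <;> ring_nf
    · obtain ⟨hh, hhh⟩ := ih' (a - 1) (max r |a - 1|)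
      refine ⟨hh, ?_⟩
      show Hf ((a : ℝ) + g.y) (max (r : ℝ) |(a : ℝ) + g.y|) L = (hh : ℝ)
      rw [hy, ← hhh]
      congr 1 <;> push_cast [Int.cast_max, Int.cast_abs] <;> ring_nf

lemma Xs_len (L : List Engel) (h : ∀ g ∈ L, Step g) :
    Xs L = (L.length : ℝ) - 2 * Bc L := by
  induction L with
  | nil => simp [Xs, Bc]
  | cons g L ih =>
    obtain ⟨hx, _, _, _⟩ := h g (List.mem_cons_self)
    have ih' := ih fun g hg => h g (List.mem_cons_of_mem _ hg)
    rcases hx with hx | hx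
    · simp only [Xs, Bc, hx, ih', List.length_cons]
      rw [if_neg (by norm_num : ¬ (1 : ℝ) = -1)]
      push_cast; ring
    · simp only [Xs, Bc, hx, ih', List.length_cons, if_true]
      push_cast; ring

lemma Qf_split (L : List Engel) (h : ∀ g ∈ L, Step g) :
    ∀ y : ℝ, Qf y L = SFf y L - SBf y L + Xs L / 12 := by
  induction L with
  | nil => intro y; simp [Qf, SFf, SBf, Xs]
  | cons g L ih =>
    intro y
    obtain ⟨hx, hy, _, _⟩ := h g (List.mem_cons_self)
    have ih' := ih fun g hg => h g (List.mem_cons_of_mem _ hg)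
    have hy2 : g.y ^ 2 = 1 := by rcases hy with h' | h' <;> rw [h'] <;> norm_num
    simp only [Qf, SFf, SBf, Xs, ih' (y + g.y)]
    rcases hx with hx | hx
    · have hne : ¬ g.x = -1 := by rw [hx]; norm_num
      rw [if_neg hne, if_neg hne, hx]
      linear_combination (-1 / 4 : ℝ) * hy2
    · rw [if_pos hx, if_pos hx, hx]
      linear_combination (1 / 4 : ℝ) * hy2

lemma SFf_ge (L : List Engel) (h : ∀ g ∈ L, Step g) :
    ∀ (a : ℤ), ((L.length : ℝ) - Bc L) / 4 ≤ SFf (a : ℝ) L := by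
  induction L with
  | nil => intro a; simp [SFf, Bc]
  | cons g L ih =>
    intro a
    obtain ⟨hx, hy, _, _⟩ := h g (List.mem_cons_self)
    have ih' := ih fun g hg => h g (List.mem_cons_of_mem _ hg)
    have ha' : ∃ a' : ℤ, (a : ℝ) + g.y = (a' : ℝ) := by
      rcases hy with hy | hy
      · exact ⟨a + 1, by rw [hy]; push_cast; ring⟩
      · exact ⟨a - 1, by rw [hy]; push_cast; ring⟩
    obtain ⟨a', haa⟩ := ha'
    have ihh := ih' a'
    rw [← haa] at ihh
    rcases hx with hx | hx
    · have hne : ¬ g.x = -1 := by rw [hx]; norm_num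
      have hq := quarter a g.y hy
      simp only [SFf, Bc, if_neg hne, List.length_cons]
      push_cast
      linarith
    · simp only [SFf, Bc, if_pos hx, List.length_cons]
      push_cast
      linarith

lemma SBf_le (L : List Engel) (h : ∀ g ∈ L, Step g) :
    ∀ y R : ℝ, |y| ≤ R → SBf y L ≤ Bc L * (Hf y R L) ^ 2 := by
  induction L with
  | nil => intro y R _; simp [SBf, Bc, Hf]
  | cons g L ih =>
    intro y R hyR
    obtain ⟨hx, hy, _, _⟩ := h g (List.mem_cons_self)
    have ih' := ih fun g hg => h g (List.mem_cons_of_mem _ hg)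
    have hy'R' : |y + g.y| ≤ max R |y + g.y| := le_max_right _ _
    have hR0 : 0 ≤ R := le_trans (abs_nonneg y) hyR
    have hR'0 : 0 ≤ max R |y + g.y| := le_trans hR0 (le_max_left _ _)
    have hHR' : max R |y + g.y| ≤ Hf (y + g.y) (max R |y + g.y|) L := Hf_ge_R L _ _
    have hH0 : 0 ≤ Hf (y + g.y) (max R |y + g.y|) L := le_trans hR'0 hHR'
    have hm : (y + g.y / 2) ^ 2 ≤ (Hf (y + g.y) (max R |y + g.y|) L) ^ 2 := by
      have h1 : (y + g.y / 2) ^ 2 ≤ max (y ^ 2) ((y + g.y) ^ 2) := mid_sq y g.y hy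
      have h2 : y ^ 2 ≤ (max R |y + g.y|) ^ 2 := by
        have hh : |y| ≤ max R |y + g.y| := le_trans hyR (le_max_left _ _)
        nlinarith [abs_nonneg y, sq_abs y]
      have h3 : (y + g.y) ^ 2 ≤ (max R |y + g.y|) ^ 2 := by
        nlinarith [abs_nonneg (y + g.y), sq_abs (y + g.y)]
      have h4 : (max R |y + g.y|) ^ 2 ≤ (Hf (y + g.y) (max R |y + g.y|) L) ^ 2 := by
        nlinarith
      exact le_trans h1 (le_trans (max_le h2 h3) h4)
    have IH := ih' (y + g.y) (max R |y + g.y|) hy'R'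
    show (if g.x = -1 then (y + g.y / 2) ^ 2 else 0) + SBf (y + g.y) L ≤
      ((if g.x = -1 then 1 else 0) + Bc L) * (Hf (y + g.y) (max R |y + g.y|) L) ^ 2
    by_cases hb : g.x = -1
    · rw [if_pos hb, if_pos hb]; nlinarith
    · rw [if_neg hb, if_neg hb]; nlinarith

lemma adj_int (a a' r : ℤ) (h1 : a' = a + 1 ∨ a' = a - 1) (h2 : |a| ≤ r)
    (h3 : r + 1 ≤ |a'|) (h4 : |a'| ≤ r + 1) :
    a + a' = 2 * r + 1 ∨ a + a' = -(2 * r + 1) := by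
  simp only [Int.abs_eq_natAbs] at h2 h3 h4
  omega

lemma crossing (L : List Engel) (h : ∀ g ∈ L, Step g) :
    ∀ (a r : ℤ), |(a : ℝ)| ≤ (r : ℝ) →
      (4 * (Hf (a : ℝ) (r : ℝ) L) ^ 3 - Hf (a : ℝ) (r : ℝ) L) / 12 ≤
        (4 * (r : ℝ) ^ 3 - (r : ℝ)) / 12 + (SFf (a : ℝ) L + SBf (a : ℝ) L) := by
  induction L with
  | nil => intro a r _; simp [Hf, SFf, SBf]
  | cons g L ih =>
    intro a r har
    obtain ⟨hx, hy, _, _⟩ := h g (List.mem_cons_self)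
    have ih' := ih fun g hg => h g (List.mem_cons_of_mem _ hg)
    have ha' : ∃ a' : ℤ, (a : ℝ) + g.y = (a' : ℝ) ∧ (a' = a + 1 ∨ a' = a - 1) := by
      rcases hy with hy | hy
      · exact ⟨a + 1, by rw [hy]; push_cast; ring, Or.inl rfl⟩
      · exact ⟨a - 1, by rw [hy]; push_cast; ring, Or.inr rfl⟩
    obtain ⟨a', haa, hadj⟩ := ha'
    have hr0 : (0 : ℤ) ≤ r := by
      have : (0 : ℝ) ≤ (r : ℝ) := le_trans (abs_nonneg _) har
      exact_mod_cast this
    have habs : |(a : ℝ) + g.y| = ((|a'| : ℤ) : ℝ) := by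
      rw [haa]; push_cast [Int.cast_abs]; ring
    have haZ : |a| ≤ r := by
      have : ((|a| : ℤ) : ℝ) ≤ (r : ℝ) := by push_cast [Int.cast_abs]; exact har
      exact_mod_cast this
    have hifs : (if g.x = -1 then ((a : ℝ) + g.y / 2) ^ 2 else 0)
        + (if g.x = -1 then 0 else ((a : ℝ) + g.y / 2) ^ 2)
        = ((a : ℝ) + g.y / 2) ^ 2 := by
      by_cases hb : g.x = -1 <;> simp [hb]
    simp only [Hf, SFf, SBf]
    rcases le_or_gt |(a : ℝ) + g.y| (r : ℝ) with hcase | hcase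
    · -- no new record
      have hmax : max (r : ℝ) |(a : ℝ) + g.y| = (r : ℝ) := max_eq_left hcase
      have IH := ih' a' r (by rw [← haa]; exact hcase)
      rw [← haa] at IH
      rw [hmax]
      nlinarith [sq_nonneg ((a : ℝ) + g.y / 2)]
    · -- new record at level r + 1
      have haint : |a'| ≤ r + 1 := by
        have h1 : |(a : ℝ) + g.y| ≤ |(a : ℝ)| + |g.y| := abs_add_le _ _
        have h2 : |g.y| = 1 := by rcases hy with hy | hy <;> rw [hy] <;> norm_num
        have h3 : |(a : ℝ) + g.y| ≤ (r : ℝ) + 1 := by rw [h2] at h1; linarith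
        rw [habs] at h3
        exact_mod_cast h3
      have haint2 : r + 1 ≤ |a'| := by
        have h5 : (r : ℝ) < ((|a'| : ℤ) : ℝ) := by rw [← habs]; exact hcase
        have h6 : r < |a'| := by exact_mod_cast h5
        omega
      have hasum := adj_int a a' r hadj haZ haint2 haint
      have hgy : g.y = (a' : ℝ) - (a : ℝ) := by linarith [haa]
      have hm : ((a : ℝ) + g.y / 2) ^ 2 = ((r : ℝ) + 1 / 2) ^ 2 := by
        rw [hgy]
        rcases hasum with hc | hc
        · have hc' : (a : ℝ) + (a' : ℝ) = 2 * (r : ℝ) + 1 := by exact_mod_cast hc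
          linear_combination (((a : ℝ) + (a' : ℝ) + 2 * (r : ℝ) + 1) / 4) * hc'
        · have hc' : (a : ℝ) + (a' : ℝ) = -(2 * (r : ℝ) + 1) := by exact_mod_cast hc
          linear_combination (((a : ℝ) + (a' : ℝ) - 2 * (r : ℝ) - 1) / 4) * hc'
      have hmax : max (r : ℝ) |(a : ℝ) + g.y| = (r : ℝ) + 1 := by
        rw [habs]
        have : ((|a'| : ℤ) : ℝ) = (r : ℝ) + 1 := by
          rw [le_antisymm haint haint2]; push_cast; ring
        rw [this]
        exact max_eq_right (by linarith)
      have IH := ih' a' (r + 1) (by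
        rw [← haa]
        have : ((|a'| : ℤ) : ℝ) ≤ ((r : ℝ) + 1) := by
          rw [le_antisymm haint haint2]; push_cast; ring_nf; rfl
        rw [habs]
        push_cast
        exact_mod_cast this)
      push_cast at IH
      rw [← haa] at IH
      rw [hmax]
      have key : (4 * ((r : ℝ) + 1) ^ 3 - ((r : ℝ) + 1)) / 12
          = (4 * (r : ℝ) ^ 3 - (r : ℝ)) / 12 + ((r : ℝ) + 1 / 2) ^ 2 := by ring
      linarith



set_option maxHeartbeats 1000000 in
/-- There is `c > 0` such that for every integer `n ≥ 1`, every finite sequence of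
elements of `{a¹, a⁻¹, b¹, b⁻¹} ⊂ Ē` whose product equals `gₙ = ((n, 0), 0, 0)`
has at least `n + c·n^{1/3}` terms: the word length of `gₙ` over `X = {a^{±1}, b^{±1}}`
exceeds its Stoll length `n` by at least `c·n^{1/3}`. -/
theorem word_length_minus_stoll_length :
    ∃ c : ℝ, 0 < c ∧ ∀ n : ℕ, 1 ≤ n → ∀ L : List Engel,
      (∀ g ∈ L, g = aPow 1 ∨ g = (aPow 1)⁻¹ ∨ g = bPow 1 ∨ g = (bPow 1)⁻¹) →
      L.prod = ⟨(n : ℝ), 0, 0, 0⟩ →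
      (n : ℝ) + c * (n : ℝ) ^ ((1 : ℝ) / 3) ≤ (L.length : ℝ) := by
  refine ⟨1 / 3, by norm_num, ?_⟩
  intro n hn L hgen hprod
  have hstep : ∀ g ∈ L, Step g := by
    intro g hg
    rcases hgen g hg with h | h | h | h <;> subst h <;>
      norm_num [Step, aPow, bPow]
  have hinv := prod_invariant L hstep
  rw [hprod] at hinv
  have hX : (n : ℝ) = Xs L := congrArg Engel.x hinv
  have hY : (0 : ℝ) = Ys L := congrArg Engel.y hinv
  have hBeq : (0 : ℝ) = Xs L * (Ys L) ^ 2 / 6 - Qf 0 L / 2 := congrArg Engel.B hinv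
  have hQ : Qf 0 L = 0 := by rw [← hY] at hBeq; nlinarith [hBeq]
  obtain ⟨b, hb⟩ := Bc_nat L
  have hlen : (L.length : ℝ) = (n : ℝ) + 2 * Bc L := by
    have h1 := Xs_len L hstep
    rw [← hX] at h1
    linarith
  have hsplit := Qf_split L hstep 0
  have hSB : SBf 0 L = SFf 0 L + (n : ℝ) / 12 := by
    rw [hQ, ← hX] at hsplit
    linarith
  have hSF : ((L.length : ℝ) - Bc L) / 4 ≤ SFf 0 L := by
    have h1 := SFf_ge L hstep 0
    simpa using h1
  have hBc0 := Bc_nonneg L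
  have hn' : (1 : ℝ) ≤ (n : ℝ) := by exact_mod_cast hn
  have hSBge : (n : ℝ) / 3 ≤ SBf 0 L := by
    rw [hSB]
    linarith
  have hSBle : SBf 0 L ≤ Bc L * (Hf 0 0 L) ^ 2 := by
    have h1 := SBf_le L hstep 0 0 (by simp)
    simpa using h1
  have hcross : (4 * (Hf 0 0 L) ^ 3 - Hf 0 0 L) / 12 ≤ SFf 0 L + SBf 0 L := by
    have h1 := crossing L hstep 0 0 (by simp)
    simpa using h1
  have hH0 : (0 : ℝ) ≤ Hf 0 0 L := by
    have h1 := Hf_ge_R L 0 0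
    simpa using h1
  obtain ⟨hh, hhh⟩ := Hf_int L hstep 0 0
  simp only [Int.cast_zero] at hhh
  have hb1 : (1 : ℝ) ≤ Bc L := by
    by_contra hc
    push_neg at hc
    have hb0 : Bc L = 0 := by
      rw [hb] at hc ⊢
      have : b = 0 := by exact_mod_cast (by exact_mod_cast Nat.lt_one_iff.mp (by exact_mod_cast hc) : b = 0)
      rw [this]; norm_num
    rw [hb0] at hSBle
    nlinarith
  have hH1 : (1 : ℝ) ≤ Hf 0 0 L := by
    by_contra hc
    push_neg at hc
    have hhb : hh = 0 := by
      have h1 : (0 : ℝ) ≤ (hh : ℝ) := by rw [← hhh]; exact hH0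
      have h2 : (hh : ℝ) < 1 := by rw [← hhh]; exact hc
      have h3 : (0 : ℤ) ≤ hh := by exact_mod_cast h1
      have h4 : hh < 1 := by exact_mod_cast h2
      omega
    rw [hhb] at hhh
    norm_num at hhh
    rw [hhh] at hSBle
    nlinarith
  have hchain : (4 * (Hf 0 0 L) ^ 3 - Hf 0 0 L) / 12 ≤ 2 * Bc L * (Hf 0 0 L) ^ 2 := by
    have hnn : (0 : ℝ) ≤ (n : ℝ) := by positivity
    linarith
  have hH6 : Hf 0 0 L ≤ 6 * Bc L + 1 / 4 := by
    by_contra hc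
    push_neg at hc
    have hp : (0 : ℝ) < 4 * (Hf 0 0 L) ^ 2 := by positivity
    have h1 := mul_lt_mul_of_pos_left hc hp
    have h2 : Hf 0 0 L ≤ (Hf 0 0 L) ^ 2 := by nlinarith
    nlinarith
  have hH6' : Hf 0 0 L ≤ 6 * Bc L := by
    have h1 : (hh : ℝ) < ((6 * (b : ℤ) + 1 : ℤ) : ℝ) := by
      push_cast
      rw [← hhh, ← hb]
      linarith
    have h2 : hh < 6 * (b : ℤ) + 1 := by exact_mod_cast h1
    have h3 : hh ≤ 6 * (b : ℤ) := by omega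
    have h4 : (hh : ℝ) ≤ ((6 * (b : ℤ) : ℤ) : ℝ) := by exact_mod_cast h3
    push_cast at h4
    rw [← hhh, ← hb] at h4
    exact h4
  have hfin : (n : ℝ) ≤ (6 * Bc L) ^ 3 := by
    have hHs : (Hf 0 0 L) ^ 2 ≤ (6 * Bc L) ^ 2 := pow_le_pow_left₀ hH0 hH6' 2
    have h5 : Bc L * (Hf 0 0 L) ^ 2 ≤ Bc L * (6 * Bc L) ^ 2 :=
      mul_le_mul_of_nonneg_left hHs hBc0
    have h6 : (0 : ℝ) ≤ (Bc L) ^ 3 := by positivity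
    nlinarith
  have h6b0 : (0 : ℝ) ≤ 6 * Bc L := by linarith
  have hroot : (n : ℝ) ^ ((1 : ℝ) / 3) ≤ 6 * Bc L := by
    have h1 : ((n : ℝ)) ^ ((1 : ℝ) / 3) ≤ ((6 * Bc L) ^ 3) ^ ((1 : ℝ) / 3) :=
      Real.rpow_le_rpow (by positivity) hfin (by norm_num)
    rw [← Real.rpow_natCast (6 * Bc L) 3, ← Real.rpow_mul h6b0] at h1
    norm_num at h1
    exact h1
  rw [hlen]
  linarith

end Engel
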